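/- Let s ≥ t ≥ 0, and let H be a family of k-subsets of [n] such that every member A of H satisfies |A ∩ [s]| ≥ t. If |H| = Σ_{i=h}^{k} C(a_i,i) − Σ_{j=0}^{t−1} C(s,j)·Σ_{i=h}^{k} C(a_i−s, i−j) for integers a_k > ⋯ > a_h ≥ h ≥ max{t,1}, then the shadow ∂H (all (k−1)-subsets contained in some member of H) satisfies |∂H| ≥ Σ_{i=h}^{k} C(a_i, i−1) − Σ_{j=0}^{t−2} C(s,j)·Σ_{i=h}^{k} C(a_i−s, i−1−j). -/

import Mathlib

/-- Binomial coefficient with the convention `C(a,b) = 0` if `b < 0` or `a < b`. -/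
def ichoose (a b : ℤ) : ℤ := if 0 ≤ b ∧ b ≤ a then ((a.toNat).choose b.toNat : ℤ) else 0

/-- `EM n k s t` is the family of `k`-subsets `A` of `[n] = {1,…,n}` with `|A ∩ [s]| ≥ t`. -/
def EM (n k s t : ℕ) : Finset (Finset ℕ) :=
  ((Finset.Icc 1 n).powersetCard k).filter fun A => t ≤ (A ∩ Finset.Icc 1 s).card

open Finset

lemma ichoose_nonneg (a b : ℤ) : 0 ≤ ichoose a b := by
  unfold ichoose; split <;> positivity

lemma ichoose_eq_zero {a b : ℤ} (h : ¬(0 ≤ b ∧ b ≤ a)) : ichoose a b = 0 := if_neg h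

lemma ichoose_pos {a b : ℤ} (h0 : 0 ≤ b) (hba : b ≤ a) : 1 ≤ ichoose a b := by
  unfold ichoose
  rw [if_pos ⟨h0, hba⟩]
  exact_mod_cast Nat.one_le_iff_ne_zero.2 (Nat.choose_pos (by omega)).ne'

lemma ichoose_self {a : ℤ} (ha : 0 ≤ a) : ichoose a a = 1 := by
  unfold ichoose; rw [if_pos ⟨ha, le_rfl⟩, Nat.choose_self]; rfl

lemma ichoose_zero_right {a : ℤ} (ha : 0 ≤ a) : ichoose a 0 = 1 := by
  unfold ichoose; rw [if_pos ⟨le_rfl, ha⟩]; simp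

lemma ichoose_pred {a : ℤ} (ha : 1 ≤ a) : ichoose a (a - 1) = a := by
  unfold ichoose
  rw [if_pos ⟨by omega, by omega⟩]
  have h1 : (a - 1).toNat = a.toNat - 1 := by omega
  have h2 : a.toNat - 1 ≤ a.toNat := by omega
  rw [h1, ← Nat.choose_symm h2]
  have : a.toNat - (a.toNat - 1) = 1 := by omega
  rw [this, Nat.choose_one_right]
  omega

lemma ichoose_pascal {a b : ℤ} (h : a ≠ 0 ∨ b ≠ 0) :
    ichoose a b = ichoose (a - 1) b + ichoose (a - 1) (b - 1) := by
  rcases le_or_gt b 0 with hb | hb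
  · rcases lt_or_eq_of_le hb with hb' | rfl
    · rw [ichoose_eq_zero (by omega), ichoose_eq_zero (by omega), ichoose_eq_zero (by omega)]
      ring
    · rcases le_or_gt a 0 with ha | ha
      · rw [ichoose_eq_zero (by omega), ichoose_eq_zero (by omega), ichoose_eq_zero (by omega)]
        ring
      · rw [ichoose_zero_right (by omega), ichoose_zero_right (by omega),
          ichoose_eq_zero (by omega)]
        ring
  · rcases le_or_gt a 0 with ha | ha
    · rw [ichoose_eq_zero (by omega), ichoose_eq_zero (by omega), ichoose_eq_zero (by omega)]
      ring
    · -- 1 ≤ a, 1 ≤ b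
      have key : ∀ x y : ℤ, 0 ≤ x → 0 ≤ y → ichoose x y = (x.toNat.choose y.toNat : ℤ) := by
        intro x y hx hy
        unfold ichoose
        split
        · rfl
        · rw [Nat.choose_eq_zero_of_lt (by omega)]; rfl
      rw [key _ _ (by omega) (by omega), key _ _ (by omega) (by omega),
        key _ _ (by omega) (by omega)]
      have h1 : a.toNat = (a - 1).toNat + 1 := by omega
      have h2 : b.toNat = (b - 1).toNat + 1 := by omega
      rw [h1, h2, Nat.choose_succ_succ]
      push_cast; ring

lemma ichoose_mono {a a' : ℤ} (b : ℤ) (h : a ≤ a') : ichoose a b ≤ ichoose a' b := by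
  rcases le_or_gt 0 b with hb | hb
  · rcases le_or_gt b a with hba | hba
    · unfold ichoose
      rw [if_pos ⟨hb, hba⟩, if_pos ⟨hb, by omega⟩]
      exact_mod_cast Nat.choose_le_choose _ (by omega)
    · rw [ichoose_eq_zero (by omega)]; exact ichoose_nonneg _ _
  · rw [ichoose_eq_zero (by omega), ichoose_eq_zero (by omega)]

/-- The cardinality formula. -/
def MM (s t h k : ℕ) (a : ℕ → ℤ) : ℤ :=
  ∑ i ∈ Finset.Icc h k, ichoose (a i) i -
    ∑ j ∈ Finset.range t, ichoose s j * ∑ i ∈ Finset.Icc h k, ichoose (a i - s) ((i : ℤ) - j)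

/-- The shadow bound formula. -/
def DD (s t h k : ℕ) (a : ℕ → ℤ) : ℤ :=
  ∑ i ∈ Finset.Icc h k, ichoose (a i) ((i : ℤ) - 1) -
    ∑ j ∈ Finset.range (t - 1), ichoose s j *
      ∑ i ∈ Finset.Icc h k, ichoose (a i - s) ((i : ℤ) - 1 - j)

lemma sum_Icc_shift (h k : ℕ) (hh : 1 ≤ h) (hk : 1 ≤ k) (f : ℕ → ℤ) :
    ∑ i ∈ Icc h k, f i = ∑ i ∈ Icc (h - 1) (k - 1), f (i + 1) := by
  have he : Icc h k = map (addLeftEmbedding 1) (Icc (h - 1) (k - 1)) := by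
    rw [Finset.map_add_left_Icc]; congr 1 <;> omega
  rw [he, Finset.sum_map]
  exact sum_congr rfl fun i _ => by rw [addLeftEmbedding_apply, Nat.add_comm]

lemma MM_congr {s t h k : ℕ} {c c' : ℕ → ℤ} (hc : ∀ i ∈ Icc h k, c i = c' i) :
    MM s t h k c = MM s t h k c' := by
  unfold MM
  rw [sum_congr rfl fun i hi => by rw [hc i hi]]
  congr 1
  exact sum_congr rfl fun j _ => by
    rw [sum_congr rfl fun i hi => by rw [hc i hi]]

lemma DD_congr {s t h k : ℕ} {c c' : ℕ → ℤ} (hc : ∀ i ∈ Icc h k, c i = c' i) :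
    DD s t h k c = DD s t h k c' := by
  unfold DD
  rw [sum_congr rfl fun i hi => by rw [hc i hi]]
  congr 1
  exact sum_congr rfl fun j _ => by
    rw [sum_congr rfl fun i hi => by rw [hc i hi]]

lemma MM_empty {s t h k : ℕ} (hk : k < h) (c : ℕ → ℤ) : MM s t h k c = 0 := by
  unfold MM
  rw [Icc_eq_empty (by omega)]
  simp

lemma MM_t0 (s s' h k : ℕ) (c : ℕ → ℤ) : MM s 0 h k c = MM s' 0 h k c := by
  unfold MM; simp

lemma DD_t1 {t : ℕ} (s s' h k : ℕ) (ht : t ≤ 1) (c : ℕ → ℤ) : DD s t h k c = DD s' t h k c := by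
  unfold DD
  have : t - 1 = 0 := by omega
  rw [this]
  simp

lemma DD_empty {s t h k : ℕ} (hk : k < h) (c : ℕ → ℤ) : DD s t h k c = 0 := by
  unfold DD
  rw [Icc_eq_empty (by omega)]
  simp

lemma MM_split_bottom {s t h k : ℕ} (hhk : h ≤ k) (c : ℕ → ℤ) :
    MM s t h k c = (ichoose (c h) h -
        ∑ j ∈ range t, ichoose s j * ichoose (c h - s) ((h : ℤ) - j)) + MM s t (h + 1) k c := by
  have hins : Icc h k = insert h (Icc (h + 1) k) := by
    ext x; simp only [mem_Icc, mem_insert]; omega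
  have hnm : h ∉ Icc (h + 1) k := by simp [mem_Icc]
  unfold MM
  rw [hins, sum_insert hnm,
    sum_congr rfl (fun j (_ : j ∈ range t) => by
      rw [sum_insert hnm, mul_add] :
      ∀ j ∈ range t, ichoose (s : ℤ) j * ∑ i ∈ insert h (Icc (h + 1) k),
          ichoose (c i - s) ((i : ℤ) - j)
        = ichoose (s : ℤ) j * ichoose (c h - s) ((h : ℤ) - j) +
          ichoose (s : ℤ) j * ∑ i ∈ Icc (h + 1) k, ichoose (c i - s) ((i : ℤ) - j)),
    sum_add_distrib]
  ring

lemma DD_split_bottom {s t h k : ℕ} (hhk : h ≤ k) (c : ℕ → ℤ) :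
    DD s t h k c = (ichoose (c h) ((h : ℤ) - 1) -
        ∑ j ∈ range (t - 1), ichoose s j * ichoose (c h - s) ((h : ℤ) - 1 - j)) +
      DD s t (h + 1) k c := by
  have hins : Icc h k = insert h (Icc (h + 1) k) := by
    ext x; simp only [mem_Icc, mem_insert]; omega
  have hnm : h ∉ Icc (h + 1) k := by simp [mem_Icc]
  unfold DD
  rw [hins, sum_insert hnm,
    sum_congr rfl (fun j (_ : j ∈ range (t - 1)) => by
      rw [sum_insert hnm, mul_add] :
      ∀ j ∈ range (t - 1), ichoose (s : ℤ) j * ∑ i ∈ insert h (Icc (h + 1) k),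
          ichoose (c i - s) ((i : ℤ) - 1 - j)
        = ichoose (s : ℤ) j * ichoose (c h - s) ((h : ℤ) - 1 - j) +
          ichoose (s : ℤ) j * ∑ i ∈ Icc (h + 1) k, ichoose (c i - s) ((i : ℤ) - 1 - j)),
    sum_add_distrib]
  ring

lemma MM_head {s t h h' k : ℕ} (hts : t ≤ s) (hh' : h ≤ h') (c : ℕ → ℤ)
    (hdeg : ∀ i ∈ Icc h k, i < h' → c i = (i : ℤ) - 1) :
    MM s t h k c = MM s t h' k c := by
  induction h', hh' using Nat.le_induction with
  | base => rfl
  | succ h' hh' ih =>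
    rw [ih (fun i hi hlt => hdeg i hi (by omega))]
    rcases lt_or_ge k h' with hk | hk
    · rw [MM_empty hk, MM_empty (by omega)]
    · rw [MM_split_bottom hk c]
      have hch : c h' = (h' : ℤ) - 1 := hdeg h' (mem_Icc.2 ⟨by omega, hk⟩) (by omega)
      rw [hch]
      have e1 : ichoose ((h' : ℤ) - 1) (h' : ℤ) = 0 := ichoose_eq_zero (by omega)
      have e2 : ∀ j ∈ range t,
          ichoose (s : ℤ) j * ichoose ((h' : ℤ) - 1 - s) ((h' : ℤ) - j) = 0 := by
        intro j hj
        have hjt : j < t := mem_range.1 hj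
        have hz : ichoose ((h' : ℤ) - 1 - s) ((h' : ℤ) - j) = 0 :=
          ichoose_eq_zero (by push_cast; omega)
        rw [hz, mul_zero]
      rw [e1, sum_eq_zero e2]
      ring

lemma MM_ones {s t h h' k : ℕ} (hts : t ≤ s) (hh' : h ≤ h') (hk' : h' ≤ k + 1) (c : ℕ → ℤ)
    (hdeg : ∀ i ∈ Icc h k, i < h' → c i = (i : ℤ)) :
    MM s t h k c = ((h' - h : ℕ) : ℤ) + MM s t h' k c := by
  induction h', hh' using Nat.le_induction with
  | base => simp
  | succ h' hh' ih =>
    have hk : h' ≤ k := by omega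
    rw [ih (by omega) (fun i hi hlt => hdeg i hi (by omega)), MM_split_bottom hk c]
    have hch : c h' = (h' : ℤ) := hdeg h' (mem_Icc.2 ⟨by omega, hk⟩) (by omega)
    rw [hch]
    have e1 : ichoose (h' : ℤ) (h' : ℤ) = 1 := ichoose_self (by positivity)
    have e2 : ∀ j ∈ range t,
        ichoose (s : ℤ) j * ichoose ((h' : ℤ) - s) ((h' : ℤ) - j) = 0 := by
      intro j hj
      have hjt : j < t := mem_range.1 hj
      have hz : ichoose ((h' : ℤ) - s) ((h' : ℤ) - j) = 0 :=
        ichoose_eq_zero (by push_cast; omega)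
      rw [hz, mul_zero]
    rw [e1, sum_eq_zero e2]
    omega

lemma DD_eq_MM {s t h k : ℕ} (hh : 1 ≤ h) (hk : 1 ≤ k) (c : ℕ → ℤ) :
    DD s t h k c = MM s (t - 1) (h - 1) (k - 1) (fun i => c (i + 1)) := by
  unfold DD MM
  rw [sum_Icc_shift h k hh hk (fun i => ichoose (c i) ((i : ℤ) - 1))]
  congr 1
  · exact sum_congr rfl fun i _ => by push_cast; ring_nf
  · refine sum_congr rfl fun j _ => ?_
    congr 1
    rw [sum_Icc_shift h k hh hk (fun i => ichoose (c i - s) ((i : ℤ) - 1 - j))]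
    exact sum_congr rfl fun i _ => by push_cast; ring_nf


lemma ich_congr {a a' b b' : ℤ} (ha : a = a') (hb : b = b') : ichoose a b = ichoose a' b' := by
  rw [ha, hb]

lemma subsum_decomp {s : ℕ} (t : ℕ) (hs : 1 ≤ s) (X : ℕ → ℤ) :
    ∑ j ∈ range t, ichoose (s : ℤ) j * X j =
      ∑ j ∈ range t, ichoose ((s : ℤ) - 1) j * X j +
        ∑ j ∈ range (t - 1), ichoose ((s : ℤ) - 1) j * X (j + 1) := by
  rcases Nat.eq_zero_or_pos t with rfl | ht
  · simp
  obtain ⟨T, rfl⟩ : ∃ T, t = T + 1 := ⟨t - 1, by omega⟩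
  have e1 : ∀ j ∈ range (T + 1), ichoose (s : ℤ) j * X j =
      ichoose ((s : ℤ) - 1) j * X j + ichoose ((s : ℤ) - 1) ((j : ℤ) - 1) * X j := by
    intro j _
    rw [ichoose_pascal (a := (s : ℤ)) (b := (j : ℤ)) (Or.inl (by omega)), add_mul]
  rw [sum_congr rfl e1, sum_add_distrib]
  congr 1
  rw [sum_range_succ' (fun j => ichoose ((s : ℤ) - 1) ((j : ℤ) - 1) * X j) T]
  have e2 : ichoose ((s : ℤ) - 1) (((0 : ℕ) : ℤ) - 1) * X 0 = 0 := by
    have hz : ichoose ((s : ℤ) - 1) (((0 : ℕ) : ℤ) - 1) = 0 :=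
      ichoose_eq_zero (by push_cast; simp)
    rw [hz, zero_mul]
  have e3 : ∀ j ∈ range T, ichoose ((s : ℤ) - 1) (((j + 1 : ℕ) : ℤ) - 1) * X (j + 1) =
      ichoose ((s : ℤ) - 1) (j : ℤ) * X (j + 1) := by
    intro j _
    rw [ich_congr rfl (by push_cast; ring)]
  rw [sum_congr rfl e3]
  have hT : T + 1 - 1 = T := by omega
  rw [hT, e2, add_zero]

lemma MM_decomp {s t h k : ℕ} (hs : 1 ≤ s) (hh : 1 ≤ h) (hk : 1 ≤ k) (a : ℕ → ℤ) :
    MM s t h k a = MM (s - 1) t h k (fun i => a i - 1) +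
      MM (s - 1) (t - 1) (h - 1) (k - 1) (fun i => a (i + 1) - 1) := by
  have hcast : ((s - 1 : ℕ) : ℤ) = (s : ℤ) - 1 := by omega
  unfold MM
  rw [hcast]
  have e1 : ∑ i ∈ Icc h k, ichoose (a i) i =
      ∑ i ∈ Icc h k, ichoose (a i - 1) i + ∑ i ∈ Icc h k, ichoose (a i - 1) ((i : ℤ) - 1) := by
    rw [← sum_add_distrib]
    exact sum_congr rfl fun i hi =>
      ichoose_pascal (Or.inr (by have := (mem_Icc.1 hi).1; push_cast; omega))
  have e2 : ∑ i ∈ Icc h k, ichoose (a i - 1) ((i : ℤ) - 1) =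
      ∑ i ∈ Icc (h - 1) (k - 1), ichoose (a (i + 1) - 1) (i : ℤ) := by
    rw [sum_Icc_shift h k hh hk (fun i => ichoose (a i - 1) ((i : ℤ) - 1))]
    exact sum_congr rfl fun i _ => ich_congr rfl (by push_cast; ring)
  have e3 : ∑ j ∈ range t, ichoose ((s : ℤ) - 1) j *
        ∑ i ∈ Icc h k, ichoose (a i - 1 - ((s : ℤ) - 1)) ((i : ℤ) - j) =
      ∑ j ∈ range t, ichoose ((s : ℤ) - 1) j *
        ∑ i ∈ Icc h k, ichoose (a i - s) ((i : ℤ) - j) := by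
    refine sum_congr rfl fun j _ => ?_
    congr 1
    exact sum_congr rfl fun i _ => ich_congr (by ring) rfl
  have e4 : ∑ j ∈ range (t - 1), ichoose ((s : ℤ) - 1) j *
        ∑ i ∈ Icc (h - 1) (k - 1), ichoose (a (i + 1) - 1 - ((s : ℤ) - 1)) ((i : ℤ) - j) =
      ∑ j ∈ range (t - 1), ichoose ((s : ℤ) - 1) j *
        ∑ i ∈ Icc h k, ichoose (a i - s) ((i : ℤ) - ((j + 1 : ℕ) : ℤ)) := by
    refine sum_congr rfl fun j _ => ?_
    congr 1
    rw [sum_Icc_shift h k hh hk (fun i => ichoose (a i - s) ((i : ℤ) - ((j + 1 : ℕ) : ℤ)))]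
    exact sum_congr rfl fun i _ => ich_congr (by ring) (by push_cast; ring)
  rw [e1, e2, e3, e4]
  have := subsum_decomp t hs (fun j => ∑ i ∈ Icc h k, ichoose (a i - s) ((i : ℤ) - j))
  push_cast at this ⊢
  linarith [this]

lemma DD_decomp {s t h k : ℕ} (hs : 1 ≤ s) (hh : 1 ≤ h) (hk : 1 ≤ k) (a : ℕ → ℤ)
    (ha : ∀ i ∈ Icc h k, 1 ≤ a i) :
    DD s t h k a = DD (s - 1) t h k (fun i => a i - 1) +
      DD (s - 1) (t - 1) (h - 1) (k - 1) (fun i => a (i + 1) - 1) := by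
  have hcast : ((s - 1 : ℕ) : ℤ) = (s : ℤ) - 1 := by omega
  unfold DD
  rw [hcast]
  have e1 : ∑ i ∈ Icc h k, ichoose (a i) ((i : ℤ) - 1) =
      ∑ i ∈ Icc h k, ichoose (a i - 1) ((i : ℤ) - 1) +
        ∑ i ∈ Icc h k, ichoose (a i - 1) ((i : ℤ) - 1 - 1) := by
    rw [← sum_add_distrib]
    exact sum_congr rfl fun i hi =>
      ichoose_pascal (Or.inl (by have := ha i hi; omega))
  have e2 : ∑ i ∈ Icc h k, ichoose (a i - 1) ((i : ℤ) - 1 - 1) =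
      ∑ i ∈ Icc (h - 1) (k - 1), ichoose (a (i + 1) - 1) ((i : ℤ) - 1) := by
    rw [sum_Icc_shift h k hh hk (fun i => ichoose (a i - 1) ((i : ℤ) - 1 - 1))]
    exact sum_congr rfl fun i _ => ich_congr rfl (by push_cast; ring)
  have e3 : ∑ j ∈ range (t - 1), ichoose ((s : ℤ) - 1) j *
        ∑ i ∈ Icc h k, ichoose (a i - 1 - ((s : ℤ) - 1)) ((i : ℤ) - 1 - j) =
      ∑ j ∈ range (t - 1), ichoose ((s : ℤ) - 1) j *
        ∑ i ∈ Icc h k, ichoose (a i - s) ((i : ℤ) - 1 - j) := by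
    refine sum_congr rfl fun j _ => ?_
    congr 1
    exact sum_congr rfl fun i _ => ich_congr (by ring) rfl
  have e4 : ∑ j ∈ range (t - 1 - 1), ichoose ((s : ℤ) - 1) j *
        ∑ i ∈ Icc (h - 1) (k - 1), ichoose (a (i + 1) - 1 - ((s : ℤ) - 1)) ((i : ℤ) - 1 - j) =
      ∑ j ∈ range (t - 1 - 1), ichoose ((s : ℤ) - 1) j *
        ∑ i ∈ Icc h k, ichoose (a i - s) ((i : ℤ) - 1 - ((j + 1 : ℕ) : ℤ)) := by
    refine sum_congr rfl fun j _ => ?_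
    congr 1
    rw [sum_Icc_shift h k hh hk (fun i => ichoose (a i - s) ((i : ℤ) - 1 - ((j + 1 : ℕ) : ℤ)))]
    exact sum_congr rfl fun i _ => ich_congr (by ring) (by push_cast; ring)
  rw [e1, e2, e3, e4]
  have := subsum_decomp (t - 1) hs (fun j => ∑ i ∈ Icc h k, ichoose (a i - s) ((i : ℤ) - 1 - j))
  push_cast at this ⊢
  linarith [this]

lemma MM_vanish : ∀ (s t h k : ℕ) (c : ℕ → ℤ), s < t → t ≤ h → MM s t h k c = 0 := by
  intro s
  induction s with
  | zero =>
    intro t h k c hst hth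
    unfold MM
    have h0 : (0 : ℕ) ∈ range t := mem_range.2 (by omega)
    rw [Finset.sum_eq_single_of_mem 0 h0 (fun j _ hj => by
      have hz : ichoose ((0 : ℕ) : ℤ) (j : ℤ) = 0 := ichoose_eq_zero (by push_cast; omega)
      rw [hz, zero_mul])]
    have e : ∑ i ∈ Icc h k, ichoose (c i - ((0 : ℕ) : ℤ)) ((i : ℤ) - ((0 : ℕ) : ℤ)) =
        ∑ i ∈ Icc h k, ichoose (c i) (i : ℤ) :=
      sum_congr rfl fun i _ => ich_congr (by push_cast; ring) (by push_cast; ring)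
    have hz1 : ichoose ((0 : ℕ) : ℤ) (((0:ℕ)) : ℤ) = 1 := ichoose_self (by positivity)
    rw [e, hz1]
    ring
  | succ s ih =>
    intro t h k c hst hth
    rcases lt_or_ge k h with hk | hk
    · exact MM_empty hk c
    have hk1 : 1 ≤ k := by omega
    rw [MM_decomp (by omega) (by omega) hk1 c, Nat.add_sub_cancel,
      ih t h k _ (by omega) hth, ih (t - 1) (h - 1) (k - 1) _ (by omega) (by omega)]
    ring

lemma chain_ge {h k : ℕ} {a : ℕ → ℤ} {c : ℤ}
    (hmono : ∀ i j, h ≤ i → i < j → j ≤ k → a i < a j) (j₀ : ℕ) (hj₀ : h ≤ j₀)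
    (hbase : (j₀ : ℤ) + c ≤ a j₀) :
    ∀ i, j₀ ≤ i → i ≤ k → (i : ℤ) + c ≤ a i := by
  intro i hi
  induction i, hi using Nat.le_induction with
  | base => intro _; exact hbase
  | succ n hn ihn =>
    intro hnk
    have h1 := ihn (by omega)
    have h2 := hmono n (n + 1) (by omega) (by omega) hnk
    push_cast
    omega

lemma MM_pos_t0 {s h k : ℕ} (hhk : h ≤ k) (a : ℕ → ℤ)
    (hai : ∀ i ∈ Icc h k, (i : ℤ) ≤ a i) : 1 ≤ MM s 0 h k a := by
  unfold MM
  rw [range_zero, sum_empty, sub_zero]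
  calc (1 : ℤ) ≤ ichoose (a h) h := ichoose_pos (by positivity)
        (hai h (mem_Icc.2 ⟨le_rfl, hhk⟩))
    _ ≤ ∑ i ∈ Icc h k, ichoose (a i) i :=
        Finset.single_le_sum (fun i _ => ichoose_nonneg _ _) (mem_Icc.2 ⟨le_rfl, hhk⟩)

lemma MM_pos : ∀ (s t h k : ℕ) (a : ℕ → ℤ), t ≤ s → t ≤ h → h ≤ k →
    (∀ i ∈ Icc h k, (i : ℤ) ≤ a i) →
    (∀ i j, h ≤ i → i < j → j ≤ k → a i < a j) → 1 ≤ MM s t h k a := by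
  intro s
  induction s with
  | zero =>
    intro t h k a hts hth hhk hai hmono
    have ht0 : t = 0 := by omega
    subst ht0
    exact MM_pos_t0 hhk a hai
  | succ s ih =>
    intro t h k a hts hth hhk hai hmono
    rcases Nat.eq_zero_or_pos t with rfl | ht
    · exact MM_pos_t0 hhk a hai
    have hh1 : 1 ≤ h := by omega
    have hk1 : 1 ≤ k := by omega
    rw [MM_decomp (by omega) hh1 hk1 a, Nat.add_sub_cancel]
    have hM1 : 1 ≤ MM s (t - 1) (h - 1) (k - 1) (fun i => a (i + 1) - 1) := by
      refine ih (t - 1) (h - 1) (k - 1) _ (by omega) (by omega) (by omega) ?_ ?_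
      · intro i hi
        have hi' := mem_Icc.1 hi
        have := hai (i + 1) (mem_Icc.2 ⟨by omega, by omega⟩)
        show (i : ℤ) ≤ a (i + 1) - 1
        push_cast at this ⊢
        omega
      · intro i j hi hij hj
        have := hmono (i + 1) (j + 1) (by omega) (by omega) (by omega)
        show a (i + 1) - 1 < a (j + 1) - 1
        omega
    have hM0 : 0 ≤ MM s t h k (fun i => a i - 1) := by
      rcases lt_or_ge s t with hst | hst
      · rw [MM_vanish s t h k _ hst hth]
      rcases le_or_gt ((h : ℤ) + 1) (a h) with hah | hah
      · have hchain := chain_ge hmono h le_rfl hah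
        have := ih t h k (fun i => a i - 1) hst hth hhk
          (fun i hi => by
            have hi' := mem_Icc.1 hi
            have := hchain i hi'.1 hi'.2
            show (i : ℤ) ≤ a i - 1
            omega)
          (fun i j hi hij hj => by
            have := hmono i j hi hij hj
            show a i - 1 < a j - 1
            omega)
        omega
      · set S := (Icc h k).filter (fun i : ℕ => (i : ℤ) + 1 ≤ a i) with hS
        have hdeg : ∀ i ∈ Icc h k, i ∉ S → a i = (i : ℤ) := by
          intro i hi hiS
          have h1 := hai i hi
          have h2 : ¬((i : ℤ) + 1 ≤ a i) := fun hc => hiS (mem_filter.2 ⟨hi, hc⟩)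
          omega
        rcases S.eq_empty_or_nonempty with hSe | hSne
        · have heq : MM s t h k (fun i => a i - 1) = MM s t (k + 1) k (fun i => a i - 1) := by
            refine MM_head hst (by omega) _ ?_
            intro i hi _
            have hiS : i ∉ S := by rw [hSe]; exact notMem_empty i
            have := hdeg i hi hiS
            show a i - 1 = (i : ℤ) - 1
            omega
          rw [heq, MM_empty (by omega)]
        · set h₀ := S.min' hSne with hh₀
          have hh₀S : h₀ ∈ S := S.min'_mem hSne
          have hh₀Icc : h₀ ∈ Icc h k := (mem_filter.1 hh₀S).1
          have hh₀a : (h₀ : ℤ) + 1 ≤ a h₀ := (mem_filter.1 hh₀S).2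
          have hIcc := mem_Icc.1 hh₀Icc
          have hhead : MM s t h k (fun i => a i - 1) = MM s t h₀ k (fun i => a i - 1) := by
            refine MM_head hst hIcc.1 _ ?_
            intro i hi hlt
            have hiS : i ∉ S := fun hiS => by
              have := S.min'_le i hiS
              omega
            have := hdeg i hi hiS
            show a i - 1 = (i : ℤ) - 1
            omega
          rw [hhead]
          have hchain := chain_ge hmono h₀ hIcc.1 hh₀a
          have := ih t h₀ k (fun i => a i - 1) hst (by omega) hIcc.2
            (fun i hi => by
              have hi' := mem_Icc.1 hi
              have := hchain i hi'.1 hi'.2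
              show (i : ℤ) ≤ a i - 1
              omega)
            (fun i j hi hij hj => by
              have := hmono i j (by omega) hij hj
              show a i - 1 < a j - 1
              omega)
          omega
    omega

def EMg (m n s t k : ℕ) : Finset (Finset ℕ) :=
  ((Finset.Icc m n).powersetCard k).filter fun A => t ≤ (A ∩ Finset.Icc m (m + s - 1)).card

lemma mem_EMg {m n s t k : ℕ} {A : Finset ℕ} :
    A ∈ EMg m n s t k ↔ A ⊆ Finset.Icc m n ∧ A.card = k ∧
      t ≤ (A ∩ Finset.Icc m (m + s - 1)).card := by
  unfold EMg
  rw [mem_filter, mem_powersetCard, and_assoc]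

lemma EMg_t0 (m n s s' k : ℕ) : EMg m n s 0 k = EMg m n s' 0 k := by
  unfold EMg
  rw [filter_true_of_mem fun _ _ => Nat.zero_le _, filter_true_of_mem fun _ _ => Nat.zero_le _]

open UV in
lemma compress_eq_of {p q : ℕ} {A : Finset ℕ} (hp : p ∉ A) (hq : q ∈ A) :
    UV.compress {p} {q} A = (insert p A).erase q := by
  rw [UV.compress, if_pos ⟨disjoint_singleton_left.2 hp, singleton_subset_iff.2 hq⟩]
  rw [sup_eq_union, union_comm, ← insert_eq, ← Finset.sdiff_singleton_eq_erase]

open UV in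
lemma compress_eq_self {p q : ℕ} {A : Finset ℕ} (h : ¬(p ∉ A ∧ q ∈ A)) :
    UV.compress {p} {q} A = A := by
  rw [UV.compress, if_neg]
  simp only [disjoint_singleton_left, Finset.le_iff_subset, singleton_subset_iff]
  exact h

lemma compression_subset_EMg {m n s t k p q : ℕ} (hmp : m ≤ p) (hpq : p < q)
    {F : Finset (Finset ℕ)} (hF : F ⊆ EMg m n s t k) :
    UV.compression {p} {q} F ⊆ EMg m n s t k := by
  intro B hB
  rcases UV.mem_compression.1 hB with ⟨hBF, -⟩ | ⟨-, A, hA, rfl⟩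
  · exact hF hBF
  by_cases hc : p ∉ A ∧ q ∈ A
  · obtain ⟨hp, hq⟩ := hc
    rw [compress_eq_of hp hq]
    obtain ⟨hsub, hcard, hint⟩ := mem_EMg.1 (hF hA)
    have hpq' : p ≠ q := hpq.ne
    have hqn : q ≤ n := (mem_Icc.1 (hsub hq)).2
    refine mem_EMg.2 ⟨?_, ?_, ?_⟩
    · intro x hx
      rw [mem_erase, mem_insert] at hx
      rcases hx.2 with rfl | hxA
      · exact mem_Icc.2 ⟨hmp, by omega⟩
      · exact hsub hxA
    · rw [card_erase_of_mem (mem_insert_of_mem hq), card_insert_of_notMem hp, hcard]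
      omega
    · set I := Finset.Icc m (m + s - 1) with hI
      by_cases hqI : q ∈ I
      · have hpI : p ∈ I := by
          rw [hI, mem_Icc] at hqI ⊢
          omega
        have hrw : ((insert p A).erase q) ∩ I = (insert p (A ∩ I)).erase q := by
          ext x
          simp only [mem_inter, mem_erase, mem_insert]
          constructor
          · rintro ⟨⟨hxq, rfl | hxA⟩, hxI⟩
            · exact ⟨hxq, Or.inl rfl⟩
            · exact ⟨hxq, Or.inr ⟨hxA, hxI⟩⟩
          · rintro ⟨hxq, rfl | ⟨hxA, hxI⟩⟩
            · exact ⟨⟨hxq, Or.inl rfl⟩, hpI⟩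
            · exact ⟨⟨hxq, Or.inr hxA⟩, hxI⟩
        rw [hrw, card_erase_of_mem (mem_insert_of_mem (mem_inter.2 ⟨hq, hqI⟩)),
          card_insert_of_notMem (fun hx => hp (mem_inter.1 hx).1)]
        omega
      · refine le_trans hint (card_le_card ?_)
        intro x hx
        rw [mem_inter] at hx
        rw [mem_inter, mem_erase, mem_insert]
        exact ⟨⟨fun he => hqI (he ▸ hx.2), Or.inr hx.1⟩, hx.2⟩
  · rw [compress_eq_self hc]
    exact hF hA

def fmeasure (F : Finset (Finset ℕ)) : ℕ := ∑ A ∈ F, ∑ x ∈ A, x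

lemma sum_compress_lt {p q : ℕ} (hpq : p < q) {A : Finset ℕ}
    (h : UV.compress {p} {q} A ≠ A) : ∑ x ∈ UV.compress {p} {q} A, x < ∑ x ∈ A, x := by
  have hc : p ∉ A ∧ q ∈ A := by
    by_contra hc
    exact h (compress_eq_self hc)
  rw [compress_eq_of hc.1 hc.2]
  have h1 : ∑ x ∈ (insert p A).erase q, x + q = ∑ x ∈ insert p A, x :=
    sum_erase_add _ _ (mem_insert_of_mem hc.2)
  have h2 : ∑ x ∈ insert p A, x = p + ∑ x ∈ A, x := sum_insert hc.1
  omega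

open UV in
lemma fmeasure_lt {p q : ℕ} (hpq : p < q) {F : Finset (Finset ℕ)}
    (hne : UV.compression {p} {q} F ≠ F) :
    fmeasure (UV.compression {p} {q} F) < fmeasure F := by
  classical
  rw [UV.compression] at hne ⊢
  have hq1 : ∀ Q ∈ F.filter fun A => compress {p} {q} A ∉ F, compress {p} {q} Q ≠ Q := by
    simp_rw [mem_filter]
    intro Q hQ h
    rw [h] at hQ
    exact hQ.2 hQ.1
  have uA : (F.filter fun A => compress {p} {q} A ∈ F) ∪
      (F.filter fun A => compress {p} {q} A ∉ F) = F := filter_union_filter_not_eq _ _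
  have ne₂ : (F.filter fun A => compress {p} {q} A ∉ F).Nonempty := by
    refine nonempty_iff_ne_empty.2 fun z => hne ?_
    rw [filter_image, z, image_empty, union_empty]
    rwa [z, union_empty] at uA
  rw [fmeasure, fmeasure, sum_union compress_disjoint]
  conv_rhs => rw [← uA]
  rw [sum_union (disjoint_filter_filter_not _ _ _), add_lt_add_iff_left, filter_image,
    sum_image compress_injOn]
  exact sum_lt_sum_of_nonempty ne₂ fun A hA => sum_compress_lt hpq (hq1 _ hA)

lemma exists_shifted (m n s t k : ℕ) (F : Finset (Finset ℕ)) (hF : F ⊆ EMg m n s t k) :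
    ∃ G, G ⊆ EMg m n s t k ∧ G.card = F.card ∧
      (Finset.shadow G).card ≤ (Finset.shadow F).card ∧
      ∀ p q, m ≤ p → p < q → UV.IsCompressed {p} {q} G := by
  classical
  by_cases hc : ∀ p q, m ≤ p → p < q → UV.IsCompressed {p} {q} F
  · exact ⟨F, hF, rfl, le_rfl, hc⟩
  push_neg at hc
  obtain ⟨p, q, hmp, hpq, hnc⟩ := hc
  have hm : fmeasure (UV.compression {p} {q} F) < fmeasure F :=
    fmeasure_lt hpq (by simpa [UV.IsCompressed] using hnc)
  obtain ⟨G, h1, h2, h3, h4⟩ := exists_shifted m n s t k (UV.compression {p} {q} F)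
    (compression_subset_EMg hmp hpq hF)
  refine ⟨G, h1, h2.trans (UV.card_compression _ _ _), h3.trans ?_, h4⟩
  refine UV.card_shadow_compression_le _ _ fun x hx => ⟨q, mem_singleton_self q, ?_⟩
  rw [mem_singleton] at hx
  subst hx
  rw [erase_singleton, erase_singleton]
  exact UV.isCompressed_self _ _
termination_by fmeasure F

lemma MM_single {s t : ℕ} (K : ℕ) (c : ℕ → ℤ) (hts : t ≤ s) (hcK : c K = (K : ℤ)) :
    MM s t K K c = 1 := by
  unfold MM
  rw [Icc_self, sum_singleton, hcK, ichoose_self (by positivity)]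
  have hz : ∀ j ∈ range t, ichoose (s : ℤ) j * ∑ i ∈ ({K} : Finset ℕ),
      ichoose (c i - s) ((i : ℤ) - j) = 0 := by
    intro j hj
    have hjt : j < t := mem_range.1 hj
    rw [sum_singleton, hcK]
    have : ichoose ((K : ℤ) - s) ((K : ℤ) - j) = 0 := ichoose_eq_zero (by push_cast; omega)
    rw [this, mul_zero]
  rw [sum_eq_zero hz]
  ring

lemma DD_single {s t : ℕ} (K : ℕ) (c : ℕ → ℤ) (hts : t ≤ s) (hK : 1 ≤ K)
    (hcK : c K = (K : ℤ)) : DD s t K K c = (K : ℤ) := by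
  unfold DD
  rw [Icc_self, sum_singleton, hcK]
  have h1 : ichoose (K : ℤ) ((K : ℤ) - 1) = (K : ℤ) := ichoose_pred (by exact_mod_cast hK)
  have hz : ∀ j ∈ range (t - 1), ichoose (s : ℤ) j * ∑ i ∈ ({K} : Finset ℕ),
      ichoose (c i - s) ((i : ℤ) - 1 - j) = 0 := by
    intro j hj
    have hjt : j < t - 1 := mem_range.1 hj
    rw [sum_singleton, hcK]
    have : ichoose ((K : ℤ) - s) ((K : ℤ) - 1 - j) = 0 := ichoose_eq_zero (by push_cast; omega)
    rw [this, mul_zero]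
  rw [h1, sum_eq_zero hz]
  ring

lemma MM_zero_head (s k : ℕ) (c : ℕ → ℤ) : MM s 0 0 k c = ichoose (c 0) 0 + MM s 0 1 k c := by
  rw [MM_split_bottom (Nat.zero_le k) c]
  simp

lemma DD_zero_head (s t k : ℕ) (c : ℕ → ℤ) : DD s t 0 k c = DD s t 1 k c := by
  rw [DD_split_bottom (Nat.zero_le k) c]
  have h1 : ichoose (c 0) (((0 : ℕ) : ℤ) - 1) = 0 := ichoose_eq_zero (by push_cast; simp)
  have hz : ∀ j ∈ range (t - 1),
      ichoose (s : ℤ) j * ichoose (c 0 - s) (((0 : ℕ) : ℤ) - 1 - j) = 0 := by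
    intro j hj
    have : ichoose (c 0 - s) (((0 : ℕ) : ℤ) - 1 - j) = 0 := ichoose_eq_zero (by push_cast; omega)
    rw [this, mul_zero]
  rw [h1, sum_eq_zero hz]
  ring

section Structural

variable {m n s t k : ℕ} {G : Finset (Finset ℕ)}

lemma card_split (m : ℕ) (G : Finset (Finset ℕ)) :
    (G.filter fun A => m ∉ A).card + ((G.filter fun A => m ∈ A).image fun A => A.erase m).card
      = G.card := by
  classical
  rw [card_image_of_injOn (fun A₁ h₁ A₂ h₂ he => by
    have hm₁ : m ∈ A₁ := (mem_filter.1 h₁).2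
    have hm₂ : m ∈ A₂ := (mem_filter.1 h₂).2
    rw [← insert_erase hm₁, he, insert_erase hm₂])]
  have := card_filter_add_card_filter_not (s := G) (p := fun A => m ∈ A)
  omega

lemma G1_subset_EMg (hs : 1 ≤ s) (hk : 1 ≤ k) (hG : G ⊆ EMg m n s t k) :
    ((G.filter fun A => m ∈ A).image fun A => A.erase m) ⊆ EMg (m+1) n (s-1) (t-1) (k-1) := by
  intro B hB
  obtain ⟨A, hA, rfl⟩ := mem_image.1 hB
  have hAG : A ∈ G := (mem_filter.1 hA).1
  have hmA : m ∈ A := (mem_filter.1 hA).2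
  obtain ⟨hsub, hcard, hint⟩ := mem_EMg.1 (hG hAG)
  refine mem_EMg.2 ⟨?_, ?_, ?_⟩
  · intro x hx
    have hxm := (mem_erase.1 hx).1
    have := mem_Icc.1 (hsub (mem_of_mem_erase hx))
    exact mem_Icc.2 ⟨by omega, this.2⟩
  · rw [card_erase_of_mem hmA, hcard]
  · have hIcc : (m + 1) + (s - 1) - 1 = m + s - 1 := by omega
    rw [hIcc]
    have hrw : (A.erase m) ∩ Finset.Icc (m+1) (m + s - 1)
        = (A ∩ Finset.Icc m (m + s - 1)).erase m := by
      ext x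
      simp only [mem_inter, mem_erase, mem_Icc]
      constructor
      · rintro ⟨⟨hxm, hxA⟩, h1, h2⟩
        exact ⟨hxm, hxA, by omega, h2⟩
      · rintro ⟨hxm, hxA, h1, h2⟩
        exact ⟨⟨hxm, hxA⟩, by omega, h2⟩
    rw [hrw]
    have := Finset.pred_card_le_card_erase (s := A ∩ Finset.Icc m (m + s - 1)) (a := m)
    omega

lemma G0_subset_EMg (hs : 1 ≤ s) (hG : G ⊆ EMg m n s t k) :
    (G.filter fun A => m ∉ A) ⊆ EMg (m+1) n (s-1) t k := by
  intro A hA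
  have hAG : A ∈ G := (mem_filter.1 hA).1
  have hmA : m ∉ A := (mem_filter.1 hA).2
  obtain ⟨hsub, hcard, hint⟩ := mem_EMg.1 (hG hAG)
  refine mem_EMg.2 ⟨?_, hcard, ?_⟩
  · intro x hx
    have := mem_Icc.1 (hsub hx)
    have hxm : x ≠ m := fun he => hmA (he ▸ hx)
    exact mem_Icc.2 ⟨by omega, this.2⟩
  · have hIcc : (m + 1) + (s - 1) - 1 = m + s - 1 := by omega
    rw [hIcc]
    have hrw : A ∩ Finset.Icc (m+1) (m + s - 1) = A ∩ Finset.Icc m (m + s - 1) := by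
      ext x
      simp only [mem_inter, mem_Icc]
      constructor
      · rintro ⟨hxA, h1, h2⟩
        exact ⟨hxA, by omega, h2⟩
      · rintro ⟨hxA, h1, h2⟩
        have hxm : x ≠ m := fun he => hmA (he ▸ hxA)
        exact ⟨hxA, by omega, h2⟩
    rw [hrw]
    exact hint

lemma shadow_lower (m : ℕ) (G : Finset (Finset ℕ)) (hG : G ⊆ EMg m n s t k) :
    ((G.filter fun A => m ∈ A).image fun A => A.erase m).card +
      (Finset.shadow ((G.filter fun A => m ∈ A).image fun A => A.erase m)).card
      ≤ (Finset.shadow G).card := by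
  classical
  set G1 := (G.filter fun A => m ∈ A).image fun A => A.erase m with hG1def
  have hG1m : ∀ B ∈ G1, m ∉ B := by
    intro B hB
    obtain ⟨A, _, rfl⟩ := mem_image.1 hB
    exact notMem_erase _ _
  have hsh : ∀ C ∈ Finset.shadow G1, m ∉ C := by
    intro C hC
    obtain ⟨B, hB, x, hx, rfl⟩ := mem_shadow_iff.1 hC
    exact fun hm => hG1m B hB (mem_of_mem_erase hm)
  have h1 : G1 ⊆ Finset.shadow G := by
    intro B hB
    obtain ⟨A, hA, rfl⟩ := mem_image.1 hB
    exact erase_mem_shadow (mem_filter.1 hA).1 (mem_filter.1 hA).2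
  have h2 : (Finset.shadow G1).image (insert m) ⊆ Finset.shadow G := by
    intro C' hC'
    obtain ⟨C, hC, rfl⟩ := mem_image.1 hC'
    obtain ⟨B, hB, x, hx, rfl⟩ := mem_shadow_iff.1 hC
    obtain ⟨A, hA, rfl⟩ := mem_image.1 hB
    have hAG : A ∈ G := (mem_filter.1 hA).1
    have hmA : m ∈ A := (mem_filter.1 hA).2
    have hxm : x ≠ m := (mem_erase.1 hx).1
    have hxA : x ∈ A := mem_of_mem_erase hx
    have hkey : insert m ((A.erase m).erase x) = A.erase x := by
      rw [Finset.erase_right_comm, insert_erase (mem_erase.2 ⟨Ne.symm hxm, hmA⟩)]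
    rw [hkey]
    exact erase_mem_shadow hAG hxA
  have hdisj : Disjoint G1 ((Finset.shadow G1).image (insert m)) := by
    rw [disjoint_left]
    intro B hB hB'
    obtain ⟨C, _, rfl⟩ := mem_image.1 hB'
    exact hG1m _ hB (mem_insert_self _ _)
  have hinj : Set.InjOn (insert m) (Finset.shadow G1 : Set (Finset ℕ)) := by
    intro C₁ h₁ C₂ h₂ he
    have := hsh C₁ h₁
    have := hsh C₂ h₂
    rw [← erase_insert (hsh C₁ h₁), he, erase_insert (hsh C₂ h₂)]
  calc G1.card + (Finset.shadow G1).card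
      = G1.card + ((Finset.shadow G1).image (insert m)).card := by
        rw [card_image_of_injOn hinj]
    _ = (G1 ∪ (Finset.shadow G1).image (insert m)).card := (card_union_of_disjoint hdisj).symm
    _ ≤ (Finset.shadow G).card := card_le_card (union_subset h1 h2)

lemma shadow_G0_subset (hG : G ⊆ EMg m n s t k)
    (hcomp : ∀ p q, m ≤ p → p < q → UV.IsCompressed {p} {q} G) :
    Finset.shadow (G.filter fun A => m ∉ A) ⊆
      (G.filter fun A => m ∈ A).image fun A => A.erase m := by
  intro B hB
  obtain ⟨A, hA, x, hx, rfl⟩ := mem_shadow_iff.1 hB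
  have hAG : A ∈ G := (mem_filter.1 hA).1
  have hmA : m ∉ A := (mem_filter.1 hA).2
  have hxm : x ≠ m := fun he => hmA (he ▸ hx)
  have hmx : m < x := by
    have := (mem_Icc.1 ((mem_EMg.1 (hG hAG)).1 hx)).1
    omega
  have h𝓒 : UV.compression {m} {x} G = G := hcomp m x le_rfl hmx
  have hmem : UV.compress {m} {x} A ∈ G := by
    rw [← h𝓒]
    exact UV.compress_mem_compression hAG
  rw [compress_eq_of hmA hx] at hmem
  refine mem_image.2 ⟨(insert m A).erase x, mem_filter.2 ⟨hmem,
    mem_erase.2 ⟨Ne.symm hxm, mem_insert_self _ _⟩⟩, ?_⟩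
  rw [Finset.erase_right_comm, erase_insert hmA]

lemma link_nonempty (hG : G ⊆ EMg m n s t k) (hk : 1 ≤ k) (hGne : G.Nonempty)
    (hcomp : ∀ p q, m ≤ p → p < q → UV.IsCompressed {p} {q} G) :
    (G.filter fun A => m ∈ A).Nonempty := by
  obtain ⟨A, hA⟩ := hGne
  by_cases hmA : m ∈ A
  · exact ⟨A, mem_filter.2 ⟨hA, hmA⟩⟩
  · have hAcard : A.card = k := (mem_EMg.1 (hG hA)).2.1
    have hAne : A.Nonempty := card_pos.1 (by omega)
    obtain ⟨x, hx⟩ := hAne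
    have hmx : m < x := by
      have := (mem_Icc.1 ((mem_EMg.1 (hG hA)).1 hx)).1
      have hxm : x ≠ m := fun he => hmA (he ▸ hx)
      omega
    have h𝓒 : UV.compression {m} {x} G = G := hcomp m x le_rfl hmx
    have hmem : UV.compress {m} {x} A ∈ G := by
      rw [← h𝓒]
      exact UV.compress_mem_compression hA
    rw [compress_eq_of hmA hx] at hmem
    exact ⟨(insert m A).erase x, mem_filter.2 ⟨hmem,
      mem_erase.2 ⟨(by omega : m ≠ x), mem_insert_self _ _⟩⟩⟩

end Structural

theorem main_shadow : ∀ (k : ℕ) (F : Finset (Finset ℕ)) (m n s t h : ℕ) (a : ℕ → ℤ),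
    max t 1 ≤ s → max t 1 ≤ h →
    (∀ i ∈ Finset.Icc h k, (i : ℤ) ≤ a i) →
    (∀ i j, h ≤ i → i < j → j ≤ k → a i < a j) →
    F ⊆ EMg m n s t k → MM s t h k a ≤ (F.card : ℤ) →
    DD s t h k a ≤ ((Finset.shadow F).card : ℤ) := by
  intro k
  induction k with
  | zero =>
    intro F m n s t h a hs hh hai hmono hF hcard
    have hh1 : 1 ≤ h := le_trans (le_max_right _ _) hh
    rw [DD_empty (by omega)]
    positivity
  | succ k ihk =>
    suffices H : ∀ (N : ℕ) (F : Finset (Finset ℕ)), F.card ≤ N →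
        ∀ (m n s t h : ℕ) (a : ℕ → ℤ),
        max t 1 ≤ s → max t 1 ≤ h →
        (∀ i ∈ Finset.Icc h (k+1), (i : ℤ) ≤ a i) →
        (∀ i j, h ≤ i → i < j → j ≤ k+1 → a i < a j) →
        F ⊆ EMg m n s t (k+1) → MM s t h (k+1) a ≤ (F.card : ℤ) →
        DD s t h (k+1) a ≤ ((Finset.shadow F).card : ℤ) by
      intro F m n s t h a hs hh hai hmono hF hcard
      exact H F.card F le_rfl m n s t h a hs hh hai hmono hF hcard
    intro N
    induction N with
    | zero =>
      intro F hF0 m n s t h a hs hh hai hmono hF hcard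
      rcases lt_or_ge (k+1) h with hkh | hhk
      · rw [DD_empty hkh]; positivity
      exfalso
      have hts : t ≤ s := le_trans (le_max_left _ _) hs
      have hth : t ≤ h := le_trans (le_max_left _ _) hh
      have h1 := MM_pos s t h (k+1) a hts hth hhk hai hmono
      have h2 : F.card = 0 := by omega
      rw [h2] at hcard
      push_cast at hcard
      omega
    | succ N ihN =>
      intro F hFN m n s t h a hs hh hai hmono hF hcard
      classical
      rcases lt_or_ge (k+1) h with hkh | hhk
      · rw [DD_empty hkh]; positivity
      have hts : t ≤ s := le_trans (le_max_left _ _) hs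
      have hs1 : 1 ≤ s := le_trans (le_max_right _ _) hs
      have hth : t ≤ h := le_trans (le_max_left _ _) hh
      have hh1 : 1 ≤ h := le_trans (le_max_right _ _) hh
      have hMpos : 1 ≤ MM s t h (k+1) a := MM_pos s t h (k+1) a hts hth hhk hai hmono
      obtain ⟨G, hGsub, hGcard, hGshadow, hGcomp⟩ := exists_shifted m n s t (k+1) F hF
      have hMG : MM s t h (k+1) a ≤ (G.card : ℤ) := by rw [hGcard]; exact hcard
      have hGpos : 0 < G.card := by omega
      have hGne : G.Nonempty := card_pos.1 hGpos
      suffices hDG : DD s t h (k+1) a ≤ ((Finset.shadow G).card : ℤ) by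
        calc DD s t h (k+1) a ≤ ((Finset.shadow G).card : ℤ) := hDG
          _ ≤ ((Finset.shadow F).card : ℤ) := by exact_mod_cast hGshadow
      set Gf := G.filter (fun A => m ∈ A) with hGf
      set G1 := Gf.image (fun A => A.erase m) with hG1
      set G0 := G.filter (fun A => m ∉ A) with hG0
      set b : ℕ → ℤ := fun i => a (i + 1) - 1 with hb
      have hcards : G0.card + G1.card = G.card := card_split m G
      have hMMsplit : MM s t h (k+1) a =
          MM (s-1) t h (k+1) (fun i => a i - 1) + MM (s-1) (t-1) (h-1) k b :=
        MM_decomp hs1 hh1 (by omega) a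
      have hshlow : G1.card + (Finset.shadow G1).card ≤ (Finset.shadow G).card :=
        shadow_lower m G hGsub
      have hShG0 : Finset.shadow G0 ⊆ G1 := shadow_G0_subset hGsub hGcomp
      -- STEP 1 : M₁ ≤ #G1
      have hstep1 : MM (s-1) (t-1) (h-1) k b ≤ (G1.card : ℤ) := by
        by_contra hlt
        push_neg at hlt
        have hG0ge : MM (s-1) t h (k+1) (fun i => a i - 1) + 1 ≤ (G0.card : ℤ) := by
          have hc2 : ((G0.card : ℤ) + G1.card = G.card) := by exact_mod_cast hcards
          omega
        rcases eq_or_lt_of_le hts with hst | hst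
        · -- s = t : G0 is empty, vanish
          have ht1 : 1 ≤ t := by omega
          have hG0e : G0 = ∅ := by
            rw [eq_empty_iff_forall_notMem]
            intro A hA
            have hAG : A ∈ G := (mem_filter.1 hA).1
            have hmA : m ∉ A := (mem_filter.1 hA).2
            have hint := (mem_EMg.1 (hGsub hAG)).2.2
            have hsub : A ∩ Finset.Icc m (m + s - 1) ⊆ (Finset.Icc m (m + s - 1)).erase m :=
              fun x hx => mem_erase.2
                ⟨fun he => hmA (he ▸ (mem_inter.1 hx).1), (mem_inter.1 hx).2⟩
            have h1 := card_le_card hsub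
            rw [card_erase_of_mem (mem_Icc.2 ⟨le_rfl, by omega⟩), Nat.card_Icc] at h1
            omega
          have hvan : MM (s-1) t h (k+1) (fun i => a i - 1) = 0 :=
            MM_vanish (s-1) t h (k+1) _ (by omega) hth
          have hG00 : G0.card = 0 := by rw [hG0e, card_empty]
          omega
        · -- t < s
          have hts1 : t ≤ s - 1 := by omega
          have hG0sub : G0 ⊆ EMg (m+1) n (s-1) t (k+1) := G0_subset_EMg hs1 hGsub
          have hGfne : Gf.Nonempty := link_nonempty hGsub (by omega) hGne hGcomp
          have hG1ne : G1.Nonempty := hGfne.image _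
          have hG1pos : 0 < G1.card := card_pos.2 hG1ne
          have hG0N : G0.card ≤ N := by omega
          have hShG0card : ((Finset.shadow G0).card : ℤ) ≤ (G1.card : ℤ) := by
            exact_mod_cast card_le_card hShG0
          rcases le_or_gt ((h : ℤ) + 1) (a h) with hah | hah
          · -- subcase A : bottom non-degenerate
            have hchain := chain_ge hmono h le_rfl hah
            have hbM : MM (s-1) t h (k+1) (fun i => a i - 1) =
                MM (max (s-1) 1) t h (k+1) (fun i => a i - 1) := by
              by_cases h2 : 2 ≤ s
              · rw [show max (s-1) 1 = s - 1 by omega]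
              · have ht0 : t = 0 := by omega
                rw [ht0]; exact MM_t0 _ _ _ _ _
            have hbD : DD (s-1) t h (k+1) (fun i => a i - 1) =
                DD (max (s-1) 1) t h (k+1) (fun i => a i - 1) := by
              by_cases h2 : 2 ≤ s
              · rw [show max (s-1) 1 = s - 1 by omega]
              · exact DD_t1 _ _ _ _ (by omega) _
            have hbE : EMg (m+1) n (s-1) t (k+1) = EMg (m+1) n (max (s-1) 1) t (k+1) := by
              by_cases h2 : 2 ≤ s
              · rw [show max (s-1) 1 = s - 1 by omega]
              · have ht0 : t = 0 := by omega
                rw [ht0]; exact EMg_t0 _ _ _ _ _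
            have hIH := ihN G0 hG0N (m+1) n (max (s-1) 1) t h (fun i => a i - 1)
              (by omega) hh
              (fun i hi => by
                have hi' := mem_Icc.1 hi
                have := hchain i hi'.1 hi'.2
                show (i : ℤ) ≤ a i - 1
                omega)
              (fun i j hi hij hj => by
                have := hmono i j hi hij hj
                show a i - 1 < a j - 1
                omega)
              (hbE ▸ hG0sub)
              (by rw [← hbM]; omega)
            rw [← hbD] at hIH
            have hDM : DD (s-1) t h (k+1) (fun i => a i - 1) = MM (s-1) (t-1) (h-1) k b :=
              DD_eq_MM hh1 (by omega) _
            omega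
          · -- subcase B : a h = h
            have hah' : a h = (h : ℤ) := by
              have := hai h (mem_Icc.2 ⟨le_rfl, hhk⟩)
              omega
            set S := (Finset.Icc h (k+1)).filter (fun i : ℕ => (i : ℤ) + 1 ≤ a i) with hSdef
            have hdeg : ∀ i ∈ Finset.Icc h (k+1), i ∉ S → a i = (i : ℤ) := by
              intro i hi hiS
              have h1 := hai i hi
              have h2 : ¬((i : ℤ) + 1 ≤ a i) := fun hc => hiS (mem_filter.2 ⟨hi, hc⟩)
              omega
            rcases S.eq_empty_or_nonempty with hSe | hSne
            · -- all degenerate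
              have hall : ∀ i ∈ Finset.Icc h (k+1), a i = (i : ℤ) :=
                fun i hi => hdeg i hi (by rw [hSe]; exact notMem_empty i)
              have hM0z : MM (s-1) t h (k+1) (fun i => a i - 1) = 0 := by
                rw [MM_head hts1 (show h ≤ k+2 by omega) _ (fun i hi _ => by
                  have := hall i hi
                  show a i - 1 = (i : ℤ) - 1
                  omega), MM_empty (by omega)]
              have hMs : MM (s-1) t (k+1) (k+1) (fun _ => ((k+1 : ℕ) : ℤ)) = 1 :=
                MM_single (k+1) _ hts1 rfl
              have hbM : MM (s-1) t (k+1) (k+1) (fun _ => ((k+1 : ℕ) : ℤ)) =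
                  MM (max (s-1) 1) t (k+1) (k+1) (fun _ => ((k+1 : ℕ) : ℤ)) := by
                by_cases h2 : 2 ≤ s
                · rw [show max (s-1) 1 = s - 1 by omega]
                · have ht0 : t = 0 := by omega
                  rw [ht0]; exact MM_t0 _ _ _ _ _
              have hbD : DD (s-1) t (k+1) (k+1) (fun _ => ((k+1 : ℕ) : ℤ)) =
                  DD (max (s-1) 1) t (k+1) (k+1) (fun _ => ((k+1 : ℕ) : ℤ)) := by
                by_cases h2 : 2 ≤ s
                · rw [show max (s-1) 1 = s - 1 by omega]
                · exact DD_t1 _ _ _ _ (by omega) _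
              have hbE : EMg (m+1) n (s-1) t (k+1) = EMg (m+1) n (max (s-1) 1) t (k+1) := by
                by_cases h2 : 2 ≤ s
                · rw [show max (s-1) 1 = s - 1 by omega]
                · have ht0 : t = 0 := by omega
                  rw [ht0]; exact EMg_t0 _ _ _ _ _
              have hIH := ihN G0 hG0N (m+1) n (max (s-1) 1) t (k+1)
                (fun _ => ((k+1 : ℕ) : ℤ))
                (by omega) (by omega)
                (fun i hi => by
                  have hi' := mem_Icc.1 hi
                  have hik : i = k + 1 := by omega
                  subst hik
                  exact le_rfl)
                (fun i j hi hij hj => (by omega : False).elim)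
                (hbE ▸ hG0sub)
                (by rw [← hbM, hMs]; omega)
              have hDs : DD (s-1) t (k+1) (k+1) (fun _ => ((k+1 : ℕ) : ℤ)) = ((k+1 : ℕ) : ℤ) :=
                DD_single (k+1) _ hts1 (by omega) rfl
              rw [← hbD, hDs] at hIH
              have hM1 : MM (s-1) (t-1) (h-1) k b =
                  ((k + 1 - (h-1) : ℕ) : ℤ) + MM (s-1) (t-1) (k+1) k b :=
                MM_ones (by omega) (by omega) (by omega) b (fun i hi _ => by
                  have hi' := mem_Icc.1 hi
                  have := hall (i+1) (mem_Icc.2 ⟨by omega, by omega⟩)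
                  show a (i+1) - 1 = (i : ℤ)
                  push_cast at this ⊢
                  omega)
              rw [MM_empty (h := k+1) (k := k) (by omega) b] at hM1
              omega
            · -- there is a non-degenerate index h₀
              set h₀ := S.min' hSne with hh₀def
              have hh₀S : h₀ ∈ S := S.min'_mem hSne
              have hh₀I := mem_Icc.1 (mem_filter.1 hh₀S).1
              have hh₀a : (h₀ : ℤ) + 1 ≤ a h₀ := (mem_filter.1 hh₀S).2
              have hmin : ∀ i ∈ Finset.Icc h (k+1), i < h₀ → a i = (i : ℤ) := by
                intro i hi hlt'
                refine hdeg i hi (fun hiS => ?_)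
                have := S.min'_le i hiS
                omega
              have hhh₀ : h < h₀ := by
                rcases eq_or_lt_of_le hh₀I.1 with he | hl
                · exfalso; rw [← he] at hh₀a; omega
                · exact hl
              set d : ℕ → ℤ := fun i => if i = h₀ - 1 then ((h₀ : ℤ) - 1) else a i - 1 with hd
              have hchain := chain_ge hmono h₀ hh₀I.1 hh₀a
              have hM0head : MM (s-1) t h (k+1) (fun i => a i - 1) =
                  MM (s-1) t h₀ (k+1) (fun i => a i - 1) :=
                MM_head hts1 hh₀I.1 _ (fun i hi hlt' => by
                  have := hmin i hi hlt'
                  show a i - 1 = (i : ℤ) - 1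
                  omega)
              have hMd : MM (s-1) t (h₀-1) (k+1) d =
                  1 + MM (s-1) t h₀ (k+1) (fun i => a i - 1) := by
                rw [MM_split_bottom (show h₀ - 1 ≤ k+1 by omega) d]
                have hd0 : d (h₀-1) = ((h₀ - 1 : ℕ) : ℤ) := by
                  show (if h₀ - 1 = h₀ - 1 then ((h₀ : ℤ) - 1) else a (h₀ - 1) - 1)
                      = ((h₀ - 1 : ℕ) : ℤ)
                  rw [if_pos rfl]
                  omega
                rw [hd0, ichoose_self (by positivity)]
                have hz : ∀ j ∈ range t, ichoose ((s-1 : ℕ) : ℤ) (j : ℤ) *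
                    ichoose (((h₀ - 1 : ℕ) : ℤ) - ((s-1 : ℕ) : ℤ)) (((h₀ - 1 : ℕ) : ℤ) - (j : ℤ)) = 0 := by
                  intro j hj
                  have hjt : j < t := mem_range.1 hj
                  have : ichoose (((h₀ - 1 : ℕ) : ℤ) - ((s-1 : ℕ) : ℤ))
                      (((h₀ - 1 : ℕ) : ℤ) - (j : ℤ)) = 0 := ichoose_eq_zero (by push_cast; omega)
                  rw [this, mul_zero]
                rw [sum_eq_zero hz, show h₀ - 1 + 1 = h₀ by omega,
                  MM_congr (fun i hi => by
                    have hi' := mem_Icc.1 hi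
                    show (if i = h₀ - 1 then ((h₀ : ℤ) - 1) else a i - 1) = a i - 1
                    exact if_neg (by omega))]
                ring
              -- IH on G0 with cascade d at h₀ - 1
              have hdai : ∀ i ∈ Finset.Icc (h₀-1) (k+1), (i : ℤ) ≤ d i := by
                intro i hi
                have hi' := mem_Icc.1 hi
                by_cases hie : i = h₀ - 1
                · show (i : ℤ) ≤ (if i = h₀ - 1 then ((h₀ : ℤ) - 1) else a i - 1)
                  rw [if_pos hie]; omega
                · show (i : ℤ) ≤ (if i = h₀ - 1 then ((h₀ : ℤ) - 1) else a i - 1)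
                  rw [if_neg hie]
                  have := hchain i (by omega) hi'.2
                  omega
              have hdmono : ∀ i j, h₀ - 1 ≤ i → i < j → j ≤ k+1 → d i < d j := by
                intro i j hi hij hj
                have hjne : j ≠ h₀ - 1 := by omega
                show (if i = h₀ - 1 then ((h₀ : ℤ) - 1) else a i - 1)
                    < (if j = h₀ - 1 then ((h₀ : ℤ) - 1) else a j - 1)
                rw [if_neg hjne]
                by_cases hie : i = h₀ - 1
                · rw [if_pos hie]
                  have := hchain j (by omega) hj
                  omega
                · rw [if_neg hie]
                  have := hmono i j (by omega) hij hj
                  omega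
              have hbM : MM (s-1) t (h₀-1) (k+1) d =
                  MM (max (s-1) 1) t (h₀-1) (k+1) d := by
                by_cases h2 : 2 ≤ s
                · rw [show max (s-1) 1 = s - 1 by omega]
                · have ht0 : t = 0 := by omega
                  rw [ht0]; exact MM_t0 _ _ _ _ _
              have hbD : DD (s-1) t (h₀-1) (k+1) d =
                  DD (max (s-1) 1) t (h₀-1) (k+1) d := by
                by_cases h2 : 2 ≤ s
                · rw [show max (s-1) 1 = s - 1 by omega]
                · exact DD_t1 _ _ _ _ (by omega) _
              have hbE : EMg (m+1) n (s-1) t (k+1) = EMg (m+1) n (max (s-1) 1) t (k+1) := by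
                by_cases h2 : 2 ≤ s
                · rw [show max (s-1) 1 = s - 1 by omega]
                · have ht0 : t = 0 := by omega
                  rw [ht0]; exact EMg_t0 _ _ _ _ _
              have hIH := ihN G0 hG0N (m+1) n (max (s-1) 1) t (h₀-1) d
                (by omega) (by omega) hdai hdmono
                (hbE ▸ hG0sub)
                (by rw [← hbM]; omega)
              rw [← hbD] at hIH
              -- Now the numeric comparison
              have hDd : DD (s-1) t (h₀-1) (k+1) d =
                  ((h₀ - 1 : ℕ) : ℤ) + DD (s-1) t h₀ (k+1) (fun i => a i - 1) := by
                rw [DD_split_bottom (show h₀ - 1 ≤ k+1 by omega) d]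
                have hd0 : d (h₀-1) = ((h₀ - 1 : ℕ) : ℤ) := by
                  show (if h₀ - 1 = h₀ - 1 then ((h₀ : ℤ) - 1) else a (h₀ - 1) - 1)
                      = ((h₀ - 1 : ℕ) : ℤ)
                  rw [if_pos rfl]
                  omega
                rw [hd0, ichoose_pred (by push_cast; omega)]
                have hz : ∀ j ∈ range (t-1), ichoose ((s-1 : ℕ) : ℤ) (j : ℤ) *
                    ichoose (((h₀ - 1 : ℕ) : ℤ) - ((s-1 : ℕ) : ℤ))
                      (((h₀ - 1 : ℕ) : ℤ) - 1 - (j : ℤ)) = 0 := by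
                  intro j hj
                  have hjt : j < t - 1 := mem_range.1 hj
                  have : ichoose (((h₀ - 1 : ℕ) : ℤ) - ((s-1 : ℕ) : ℤ))
                      (((h₀ - 1 : ℕ) : ℤ) - 1 - (j : ℤ)) = 0 := ichoose_eq_zero (by push_cast; omega)
                  rw [this, mul_zero]
                rw [sum_eq_zero hz, show h₀ - 1 + 1 = h₀ by omega,
                  DD_congr (fun i hi => by
                    have hi' := mem_Icc.1 hi
                    show (if i = h₀ - 1 then ((h₀ : ℤ) - 1) else a i - 1) = a i - 1
                    exact if_neg (by omega))]
                ring
              have hDM0 : DD (s-1) t h₀ (k+1) (fun i => a i - 1) =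
                  MM (s-1) (t-1) (h₀-1) k b := DD_eq_MM (by omega) (by omega) _
              have hM1 : MM (s-1) (t-1) (h-1) k b =
                  ((h₀ - 1 - (h-1) : ℕ) : ℤ) + MM (s-1) (t-1) (h₀-1) k b :=
                MM_ones (by omega) (by omega) (by omega) b (fun i hi hlt' => by
                  have hi' := mem_Icc.1 hi
                  have := hmin (i+1) (mem_Icc.2 ⟨by omega, by omega⟩) (by omega)
                  show a (i+1) - 1 = (i : ℤ)
                  push_cast at this ⊢
                  omega)
              omega
      -- STEP 2 : shadow of the link
      have hG1sub : G1 ⊆ EMg (m+1) n (s-1) (t-1) k := G1_subset_EMg hs1 (by omega) hGsub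
      have hstep2 : DD (s-1) (t-1) (h-1) k b ≤ ((Finset.shadow G1).card : ℤ) := by
        have hbM : MM (s-1) (t-1) (h-1) k b = MM (max (s-1) 1) (t-1) (h-1) k b := by
          by_cases h2 : 2 ≤ s
          · rw [show max (s-1) 1 = s - 1 by omega]
          · have ht0 : t - 1 = 0 := by omega
            rw [ht0]; exact MM_t0 _ _ _ _ _
        have hbE : EMg (m+1) n (s-1) (t-1) k = EMg (m+1) n (max (s-1) 1) (t-1) k := by
          by_cases h2 : 2 ≤ s
          · rw [show max (s-1) 1 = s - 1 by omega]
          · have ht0 : t - 1 = 0 := by omega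
            rw [ht0]; exact EMg_t0 _ _ _ _ _
        have hbD : DD (max (s-1) 1) (t-1) (h-1) k b = DD (s-1) (t-1) (h-1) k b := by
          by_cases h2 : 2 ≤ s
          · rw [show max (s-1) 1 = s - 1 by omega]
          · exact DD_t1 _ _ _ _ (by omega) _
        have hMh : MM (max (s-1) 1) (t-1) (max (h-1) 1) k b ≤
            MM (max (s-1) 1) (t-1) (h-1) k b := by
          by_cases hh2 : 2 ≤ h
          · rw [show max (h-1) 1 = h - 1 by omega]
          · have ht1 : t - 1 = 0 := by omega
            rw [show max (h-1) 1 = 1 by omega, show h - 1 = 0 by omega, ht1,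
              MM_zero_head (max (s-1) 1) k b]
            have := ichoose_nonneg (b 0) 0
            omega
        have hDh : DD (max (s-1) 1) (t-1) (h-1) k b = DD (max (s-1) 1) (t-1) (max (h-1) 1) k b := by
          by_cases hh2 : 2 ≤ h
          · rw [show max (h-1) 1 = h - 1 by omega]
          · rw [show max (h-1) 1 = 1 by omega, show h - 1 = 0 by omega]
            exact DD_zero_head _ _ _ _
        have hIH := ihk G1 (m+1) n (max (s-1) 1) (t-1) (max (h-1) 1) b
          (by omega) (by omega)
          (fun i hi => by
            have hi' := mem_Icc.1 hi
            have := hai (i+1) (mem_Icc.2 ⟨by omega, by omega⟩)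
            show (i : ℤ) ≤ a (i+1) - 1
            push_cast at this ⊢
            omega)
          (fun i j hi hij hj => by
            have := hmono (i+1) (j+1) (by omega) (by omega) (by omega)
            show a (i+1) - 1 < a (j+1) - 1
            omega)
          (hbE ▸ hG1sub)
          (by omega)
        omega
      -- STEP 3 : assemble
      have hDDdec : DD s t h (k+1) a =
          DD (s-1) t h (k+1) (fun i => a i - 1) + DD (s-1) (t-1) (h-1) k b :=
        DD_decomp hs1 hh1 (by omega) a (fun i hi => by
          have h1 := hai i hi
          have h2 := (mem_Icc.1 hi).1
          omega)
      have hDJ : DD (s-1) t h (k+1) (fun i => a i - 1) = MM (s-1) (t-1) (h-1) k b :=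
        DD_eq_MM hh1 (by omega) _
      have hcast : ((G1.card : ℤ) + ((Finset.shadow G1).card : ℤ)) ≤
          ((Finset.shadow G).card : ℤ) := by exact_mod_cast hshlow
      omega


theorem stmt2 (n k s t h : ℕ) (a : ℕ → ℕ) (H : Finset (Finset ℕ))
    (hts : t ≤ s) (hH : H ⊆ EM n k s t)
    (hh : max t 1 ≤ h) (hhk : h ≤ k) (hah : h ≤ a h) (hmono : StrictMonoOn a (Set.Icc h k))
    (hcard : (H.card : ℤ) = ∑ i ∈ Finset.Icc h k, ichoose (a i) i -
      ∑ j ∈ Finset.range t, ichoose s j *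
        ∑ i ∈ Finset.Icc h k, ichoose ((a i : ℤ) - s) ((i : ℤ) - j)) :
    ((Finset.shadow H).card : ℤ) ≥ ∑ i ∈ Finset.Icc h k, ichoose (a i) ((i : ℤ) - 1) -
      ∑ j ∈ Finset.range (t - 1), ichoose s j *
        ∑ i ∈ Finset.Icc h k, ichoose ((a i : ℤ) - s) ((i : ℤ) - 1 - j) := by
  classical
  set A : ℕ → ℤ := fun i => (a i : ℤ) with hA
  have hmono' : ∀ i j, h ≤ i → i < j → j ≤ k → A i < A j := by
    intro i j hi hij hj
    have := hmono (Set.mem_Icc.2 ⟨hi, by omega⟩) (Set.mem_Icc.2 ⟨by omega, hj⟩) hij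
    show ((a i : ℕ) : ℤ) < ((a j : ℕ) : ℤ)
    exact_mod_cast this
  have hai : ∀ i ∈ Finset.Icc h k, (i : ℤ) ≤ A i := by
    intro i hi
    have hi' := Finset.mem_Icc.1 hi
    have hbase : (h : ℤ) + 0 ≤ A h := by
      show (h : ℤ) + 0 ≤ ((a h : ℕ) : ℤ)
      omega
    have := chain_ge hmono' h le_rfl hbase i hi'.1 hi'.2
    omega
  have hEM : EM n k s t = EMg 1 n s t k := by
    unfold EM EMg
    rw [show 1 + s - 1 = s by omega]
  have hMM : MM s t h k A ≤ (H.card : ℤ) := le_of_eq hcard.symm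
  have hsub : H ⊆ EMg 1 n (max s 1) t k := by
    by_cases hs1 : 1 ≤ s
    · rw [show max s 1 = s by omega, ← hEM]
      exact hH
    · have ht0 : t = 0 := by omega
      rw [ht0, EMg_t0 1 n (max s 1) s k]
      rw [hEM] at hH
      rw [ht0] at hH
      exact hH
  have hMM' : MM (max s 1) t h k A ≤ (H.card : ℤ) := by
    by_cases hs1 : 1 ≤ s
    · rw [show max s 1 = s by omega]
      exact hMM
    · have ht0 : t = 0 := by omega
      rw [ht0, MM_t0 (max s 1) s h k A]
      rw [ht0] at hMM
      exact hMM
  have hmain := main_shadow k H 1 n (max s 1) t h A (by omega) hh hai hmono' hsub hMM'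
  have hgoal : DD s t h k A = DD (max s 1) t h k A := by
    by_cases hs1 : 1 ≤ s
    · rw [show max s 1 = s by omega]
    · exact DD_t1 _ _ _ _ (by omega) _
  show ((Finset.shadow H).card : ℤ) ≥ DD s t h k A
  rw [hgoal]
  exact hmain
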